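/- It is impossible for all three of b - a, b' - a, and b - a' to be powers of 2 when a, a', b', b are integers with a < a' < b' < b, b - a = (b - a') + (a' - a), and specifically: if a < a' < b' < b are integers, then b - a, b' - a, and b - a' cannot all be powers of 2. -/
import Mathlib


/-- A power of 2: an integer of the form 2^t with t ≥ 0. -/
def IsPow2Z (m : ℤ) : Prop := ∃ t : ℕ, m = 2 ^ t

/-- If a < a' < b' < b are integers, then b - a, b' - a, and b - a'
cannot all be powers of 2. -/
theorem no_three_pow2_differences (a a' b' b : ℤ)
    (h1 : a < a') (h2 : a' < b') (h3 : b' < b) :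
    ¬ (IsPow2Z (b - a) ∧ IsPow2Z (b' - a) ∧ IsPow2Z (b - a')) := by
  rintro ⟨⟨t, ht⟩, ⟨u, hu⟩, ⟨v, hv⟩⟩
  have h2le : (1:ℤ) < 2 := by norm_num
  have hut : u < t := by
    have : (2:ℤ) ^ u < 2 ^ t := by rw [← ht, ← hu]; linarith
    exact (pow_lt_pow_iff_right₀ h2le).mp this
  have hvt : v < t := by
    have : (2:ℤ) ^ v < 2 ^ t := by rw [← ht, ← hv]; linarith
    exact (pow_lt_pow_iff_right₀ h2le).mp this
  have h1' : (2:ℤ) ^ u ≤ 2 ^ (t - 1) := pow_le_pow_right₀ (by norm_num) (by omega)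
  have h2' : (2:ℤ) ^ v ≤ 2 ^ (t - 1) := pow_le_pow_right₀ (by norm_num) (by omega)
  have hsum : (2:ℤ) ^ (t - 1) + 2 ^ (t - 1) = 2 ^ t := by
    rw [← two_mul, ← pow_succ']
    congr 1
    omega
  have : (2:ℤ) ^ u + 2 ^ v > 2 ^ t := by rw [← ht, ← hu, ← hv]; linarith
  linarith
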